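/- Let Q be an m×m real symmetric matrix such that the all-ones vector 𝟏 is an eigenvector of Q, let d ≤ m − 1, and let Λ = diag(λ₁, …, λ_d) with λ₁ ≥ λ₂ ≥ … ≥ λ_d ≥ 0. Then there exists S* ∈ ℝ^{d×m} with S* S*ᵀ = Λ and S* 𝟏 = 0, whose j-th row equals √λ_j times a unit eigenvector of Q, these eigenvectors being pairwise orthogonal and each orthogonal to 𝟏 and associated with the d largest eigenvalues of Q after removing one occurrence of the eigenvalue of 𝟏 (ordered nonincreasingly), such that for every S ∈ ℝ^{d×m} with S Sᵀ = Λ and S 𝟏 = 0 one has tr(S Q Sᵀ) ≤ tr(S* Q S*ᵀ). In other words, the maximum of tr(S Q Sᵀ) subject to S Sᵀ = Λ and S 𝟏 = 0 is attained by scaling by √Λ the d top eigenvectors of Q excluding the vector 𝟏. -/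

import Mathlib

open Matrix

open Finset

lemma sum_range_dite {M : Type*} [AddCommMonoid M] (k : ℕ) (g : Fin k → M) :
    ∑ v ∈ Finset.range k, (if h : v < k then g ⟨v, h⟩ else 0) = ∑ j : Fin k, g j := by
  rw [← Fin.sum_univ_eq_sum_range (fun v => if h : v < k then g ⟨v, h⟩ else 0) k]
  exact Finset.sum_congr rfl fun j _ => by simp [j.isLt]

lemma telescope_Ico (f : ℕ → ℝ) (j d : ℕ) (h : j ≤ d) :
    ∑ a ∈ Finset.Ico j d, (f a - f (a + 1)) = f j - f d := by
  induction d with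
  | zero => interval_cases j; simp
  | succ n ih =>
    rcases Nat.lt_or_ge j (n+1) with h' | h'
    · rw [Finset.sum_Ico_succ_top (by omega), ih (by omega)]; ring
    · have : j = n + 1 := by omega
      subst this; simp

lemma sum_dotProduct' {d m : ℕ} (f : Fin d → Fin m → ℝ) (y : Fin m → ℝ) :
    (∑ j, f j) ⬝ᵥ y = ∑ j, f j ⬝ᵥ y := by
  simp only [dotProduct, Finset.sum_apply, Finset.sum_mul]
  exact Finset.sum_comm

lemma dotProduct_sum' {d m : ℕ} (f : Fin d → Fin m → ℝ) (y : Fin m → ℝ) :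
    y ⬝ᵥ (∑ j, f j) = ∑ j, y ⬝ᵥ f j := by
  rw [dotProduct_comm, sum_dotProduct']
  exact Finset.sum_congr rfl fun j _ => dotProduct_comm _ _

lemma bessel {m d : ℕ} (v : Fin d → Fin m → ℝ)
    (horth : ∀ j k, j ≠ k → v j ⬝ᵥ v k = 0)
    (hnorm : ∀ j, v j ⬝ᵥ v j ≤ 1)
    (x : Fin m → ℝ) (hx : x ⬝ᵥ x = 1) :
    ∑ j, (v j ⬝ᵥ x) ^ 2 ≤ 1 := by
  set q : Fin d → ℝ := fun j => v j ⬝ᵥ x with hq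
  set r : Fin m → ℝ := x - ∑ j, q j • v j with hr
  have hrr : 0 ≤ r ⬝ᵥ r := Finset.sum_nonneg fun i _ => mul_self_nonneg _
  have expand : r ⬝ᵥ r = x ⬝ᵥ x - 2 * ∑ j, q j ^ 2
      + ∑ j, ∑ k, q j * q k * (v j ⬝ᵥ v k) := by
    rw [hr, sub_dotProduct, dotProduct_sub, dotProduct_sub]
    rw [dotProduct_sum', sum_dotProduct']
    simp only [sum_dotProduct', dotProduct_sum', dotProduct_smul,
      smul_dotProduct, smul_eq_mul]
    have h1 : ∀ j, x ⬝ᵥ v j = q j := fun j => dotProduct_comm x (v j)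
    have h2 : ∀ j, v j ⬝ᵥ x = q j := fun j => rfl
    simp only [h1, h2, Finset.mul_sum]
    have e1 : (∑ x : Fin d, ∑ i : Fin d, q x * (q i * (v i ⬝ᵥ v x)))
        = ∑ j, ∑ k, q j * q k * (v j ⬝ᵥ v k) := by
      rw [Finset.sum_comm]
      exact Finset.sum_congr rfl fun j _ => Finset.sum_congr rfl fun k _ => by ring
    have e2 : (∑ x : Fin d, q x * q x) = ∑ j, q j ^ 2 :=
      Finset.sum_congr rfl fun j _ => (sq (q j)).symm
    rw [e1, e2, show (∑ i : Fin d, 2 * q i ^ 2) = 2 * ∑ j, q j ^ 2 from (Finset.mul_sum _ _ _).symm]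
    ring
  have diag : ∑ j, ∑ k, q j * q k * (v j ⬝ᵥ v k) ≤ ∑ j, q j ^ 2 := by
    have : ∀ j : Fin d, ∑ k, q j * q k * (v j ⬝ᵥ v k) = q j ^ 2 * (v j ⬝ᵥ v j) := by
      intro j
      rw [Finset.sum_eq_single j]
      · ring
      · intro k _ hk; rw [horth j k (Ne.symm hk)]; ring
      · simp
    rw [Finset.sum_congr rfl fun j _ => this j]
    apply Finset.sum_le_sum
    intro j _
    have := sq_nonneg (q j)
    nlinarith [hnorm j, sq_nonneg (q j)]
  nlinarith [hrr, expand, diag, hx]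

lemma key_ineq (d n : ℕ) (hdn : d ≤ n) (L B : ℕ → ℝ) (P : ℕ → ℕ → ℝ)
    (hL0 : ∀ j, j < d → 0 ≤ L j)
    (hLanti : ∀ j k, j ≤ k → k < d → L k ≤ L j)
    (hBanti : ∀ i k, i ≤ k → k < n → B k ≤ B i)
    (hP0 : ∀ j i, 0 ≤ P j i)
    (hProw : ∀ j, j < d → 0 < L j → ∑ i ∈ range n, P j i = 1)
    (hPcol : ∀ i, ∑ j ∈ range d, P j i ≤ 1) :
    ∑ j ∈ range d, L j * ∑ i ∈ range n, P j i * B i ≤ ∑ j ∈ range d, L j * B j := by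
  set Lz : ℕ → ℝ := fun v => if v < d then L v else 0 with hLz
  set D : ℕ → ℝ := fun a => Lz a - Lz (a + 1) with hD
  have hLsum : ∀ j, j < d → L j = ∑ a ∈ Finset.Ico j d, D a := by
    intro j hj
    have := telescope_Ico Lz j d (le_of_lt hj)
    simp only [hD]
    rw [this, hLz]
    simp [hj]
  have hD0 : ∀ a, a < d → 0 ≤ D a := by
    intro a ha
    simp only [hD, hLz, if_pos ha, sub_nonneg]
    by_cases h : a + 1 < d
    · rw [if_pos h]; exact hLanti a (a + 1) (Nat.le_succ a) h
    · rw [if_neg h]; exact hL0 a ha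
  have hDL : ∀ a, a < d → 0 < D a → ∀ j, j ≤ a → 0 < L j := by
    intro a ha hDa j hj
    have h1 : (0:ℝ) ≤ Lz (a + 1) := by
      simp only [hLz]; split
      · exact hL0 _ ‹_›
      · exact le_refl 0
    have h2 : 0 < Lz a := by
      have hlt : Lz (a + 1) < Lz a := by
        simp only [hD] at hDa; linarith
      linarith
    have h3 : 0 < L a := by simpa [hLz, ha] using h2
    exact lt_of_lt_of_le h3 (hLanti j a hj ha)
  -- exchange of summation
  have exch : ∀ F : ℕ → ℝ, ∑ j ∈ range d, L j * F j
      = ∑ a ∈ range d, D a * ∑ j ∈ range (a + 1), F j := by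
    intro F
    calc ∑ j ∈ range d, L j * F j
        = ∑ j ∈ range d, ∑ a ∈ Finset.Ico j d, D a * F j := by
          refine Finset.sum_congr rfl fun j hj => ?_
          rw [hLsum j (mem_range.mp hj), Finset.sum_mul]
      _ = ∑ a ∈ range d, ∑ j ∈ range (a + 1), D a * F j := by
          rw [Finset.range_eq_Ico]
          rw [Finset.sum_Ico_Ico_comm 0 d (fun j a => D a * F j)]
          simp only [Finset.range_eq_Ico]
      _ = ∑ a ∈ range d, D a * ∑ j ∈ range (a + 1), F j := by
          exact Finset.sum_congr rfl fun a _ => (Finset.mul_sum _ _ _).symm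
  rw [exch (fun j => ∑ i ∈ range n, P j i * B i), exch B]
  apply Finset.sum_le_sum
  intro a ha
  rcases (hD0 a (mem_range.mp ha)).eq_or_lt with hDa | hDa
  · rw [← hDa, zero_mul, zero_mul]
  apply mul_le_mul_of_nonneg_left _ (le_of_lt hDa)
  -- inner inequality
  have had : a < d := mem_range.mp ha
  have hLpos : ∀ j, j ≤ a → 0 < L j := hDL a had hDa
  set q : ℕ → ℝ := fun i => ∑ j ∈ range (a + 1), P j i with hq
  have hq0 : ∀ i, 0 ≤ q i := fun i => Finset.sum_nonneg fun j _ => hP0 j i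
  have hq1 : ∀ i, q i ≤ 1 := by
    intro i
    refine le_trans ?_ (hPcol i)
    exact Finset.sum_le_sum_of_subset_of_nonneg
      (Finset.range_subset_range.mpr (by omega)) (fun j _ _ => hP0 j i)
  have hqsum : ∑ i ∈ range n, q i = (a : ℝ) + 1 := by
    simp only [hq]
    rw [Finset.sum_comm]
    rw [Finset.sum_congr rfl fun j hj => hProw j (by have := mem_range.mp hj; omega)
      (hLpos j (Nat.lt_succ_iff.mp (mem_range.mp hj)))]
    simp
  have lhs_eq : ∑ j ∈ range (a + 1), ∑ i ∈ range n, P j i * B i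
      = ∑ i ∈ range n, q i * B i := by
    rw [Finset.sum_comm]
    exact Finset.sum_congr rfl fun i _ => (Finset.sum_mul _ _ _).symm
  have rhs_eq : ∑ j ∈ range (a + 1), B j
      = ∑ i ∈ range n, (if i < a + 1 then (1:ℝ) else 0) * B i := by
    rw [← Finset.sum_subset (Finset.range_subset_range.mpr (show a + 1 ≤ n by omega))
        (fun x _ hx => by rw [if_neg (by simpa using hx), zero_mul])]
    exact (Finset.sum_congr rfl fun j hj => by rw [if_pos (mem_range.mp hj), one_mul]).symm
  have hchi : ∑ i ∈ range n, (if i < a + 1 then (1:ℝ) else 0) = (a : ℝ) + 1 := by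
    rw [← Finset.sum_subset (Finset.range_subset_range.mpr (show a + 1 ≤ n by omega))
        (fun x _ hx => if_neg (by simpa using hx))]
    rw [Finset.sum_congr rfl fun j hj => if_pos (mem_range.mp hj)]
    simp
  rw [lhs_eq, rhs_eq]
  have step : ∀ i ∈ range n, q i * B i ≤ (if i < a + 1 then (1:ℝ) else 0) * B i
      + (q i - (if i < a + 1 then 1 else 0)) * B a := by
    intro i hi
    have hin : i < n := mem_range.mp hi
    by_cases h : i < a + 1
    · simp only [if_pos h]
      have hBa : B a ≤ B i := hBanti i a (by omega) (by omega)
      nlinarith [hq1 i]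
    · simp only [if_neg h]
      have hBa : B i ≤ B a := hBanti a i (by omega) hin
      nlinarith [hq0 i]
  calc ∑ i ∈ range n, q i * B i
      ≤ ∑ i ∈ range n, ((if i < a + 1 then (1:ℝ) else 0) * B i
          + (q i - (if i < a + 1 then 1 else 0)) * B a) := Finset.sum_le_sum step
    _ = ∑ i ∈ range n, (if i < a + 1 then (1:ℝ) else 0) * B i := by
        rw [Finset.sum_add_distrib, ← Finset.sum_mul, Finset.sum_sub_distrib, hqsum, hchi]
        ring

lemma parseval {m : ℕ} (hm : 1 ≤ m) (w : Fin (m - 1) → Fin m → ℝ)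
    (hw_orth : ∀ i j : Fin (m - 1), w i ⬝ᵥ w j = if i = j then (1:ℝ) else 0)
    (hw_one : ∀ i, w i ⬝ᵥ (fun _ => (1:ℝ)) = 0)
    (x y : Fin m → ℝ) :
    x ⬝ᵥ y = (∑ i, (w i ⬝ᵥ x) * (w i ⬝ᵥ y))
      + (x ⬝ᵥ (fun _ => (1:ℝ))) * (y ⬝ᵥ (fun _ => (1:ℝ))) / m := by
  obtain ⟨n, rfl⟩ : ∃ n, m = n + 1 := ⟨m - 1, by omega⟩
  have hm0 : ((n:ℝ) + 1) ≠ 0 := by positivity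
  set c : ℝ := (Real.sqrt (n + 1))⁻¹ with hc
  have hsq : c * c = ((n:ℝ) + 1)⁻¹ := by
    rw [hc, ← mul_inv, Real.mul_self_sqrt (by positivity)]
  set A : Matrix (Fin (n + 1)) (Fin (n + 1)) ℝ := Matrix.of fun k i =>
    if h : (k : ℕ) < n then w ⟨k, h⟩ i else c with hA
  have hAAT : A * Aᵀ = 1 := by
    ext k l
    simp only [Matrix.mul_apply, Matrix.transpose_apply, Matrix.one_apply, hA, Matrix.of_apply]
    by_cases hk : (k : ℕ) < n <;> by_cases hl : (l : ℕ) < n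
    · simp only [dif_pos hk, dif_pos hl]
      rw [show (∑ i, w ⟨k, hk⟩ i * w ⟨l, hl⟩ i) = w ⟨k, hk⟩ ⬝ᵥ w ⟨l, hl⟩ from rfl,
        hw_orth]
      simp [Fin.ext_iff]
    · simp only [dif_pos hk, dif_neg hl]
      have h0 : (∑ i, w ⟨k, hk⟩ i) = 0 := by
        simpa [dotProduct] using hw_one ⟨k, hk⟩
      rw [← Finset.sum_mul, h0, zero_mul, if_neg (Fin.ne_of_val_ne (by omega))]
    · simp only [dif_neg hk, dif_pos hl]
      have h0 : (∑ i, w ⟨l, hl⟩ i) = 0 := by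
        simpa [dotProduct] using hw_one ⟨l, hl⟩
      rw [← Finset.mul_sum, h0, mul_zero, if_neg (Fin.ne_of_val_ne (by omega))]
    · simp only [dif_neg hk, dif_neg hl]
      have hkl : k = l := by
        apply Fin.ext; have := k.isLt; have := l.isLt; omega
      rw [if_pos hkl, Finset.sum_const, Finset.card_univ, Fintype.card_fin, hsq,
        nsmul_eq_mul]
      push_cast
      field_simp
  have hATA : Aᵀ * A = 1 := mul_eq_one_comm.mp hAAT
  have claimE : ∀ a b : Fin (n + 1),
      (∑ i, w i a * w i b) + ((n:ℝ) + 1)⁻¹ = if a = b then 1 else 0 := by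
    intro a b
    have h := congrFun (congrFun hATA a) b
    simp only [Matrix.mul_apply, Matrix.transpose_apply, Matrix.one_apply, hA,
      Matrix.of_apply] at h
    rw [Fin.sum_univ_castSucc] at h
    have hlast : ¬ ((Fin.last n : Fin (n+1)) : ℕ) < n := by simp
    have e1 : ∀ i : Fin n,
        (if h : ((Fin.castSucc i : Fin (n+1)) : ℕ) < n then w ⟨(Fin.castSucc i : Fin (n+1)), h⟩ a else c)
          * (if h : ((Fin.castSucc i : Fin (n+1)) : ℕ) < n then w ⟨(Fin.castSucc i : Fin (n+1)), h⟩ b else c)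
        = w i a * w i b := by
      intro i
      have hi : ((Fin.castSucc i : Fin (n+1)) : ℕ) < n := by simp
      simp only [dif_pos hi]
      rfl
    simp only [dif_neg hlast] at h
    rw [Finset.sum_congr rfl (fun i _ => e1 i), hsq] at h
    exact h
  -- now the main computation
  have hswap : (∑ i, (w i ⬝ᵥ x) * (w i ⬝ᵥ y))
      = ∑ a, ∑ b, x a * y b * (∑ i, w i a * w i b) := by
    have e1 : ∀ i, (w i ⬝ᵥ x) * (w i ⬝ᵥ y) = ∑ a, ∑ b, x a * y b * (w i a * w i b) := by
      intro i
      rw [dotProduct, dotProduct, Finset.sum_mul]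
      refine Finset.sum_congr rfl fun a _ => ?_
      rw [Finset.mul_sum]
      exact Finset.sum_congr rfl fun b _ => by ring
    rw [Finset.sum_congr rfl fun i _ => e1 i, Finset.sum_comm]
    refine Finset.sum_congr rfl fun a _ => ?_
    rw [Finset.sum_comm]
    exact Finset.sum_congr rfl fun b _ => (Finset.mul_sum _ _ _).symm
  have hone : (x ⬝ᵥ (fun _ => (1:ℝ))) * (y ⬝ᵥ (fun _ => (1:ℝ))) / ((n:ℕ) + 1 : ℕ)
      = ∑ a, ∑ b, x a * y b * ((n:ℝ) + 1)⁻¹ := by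
    simp only [dotProduct, mul_one, div_eq_mul_inv]
    rw [Finset.sum_mul_sum, Finset.sum_mul]
    refine Finset.sum_congr rfl fun a _ => ?_
    rw [Finset.sum_mul]
    refine Finset.sum_congr rfl fun b _ => ?_
    push_cast
    ring
  calc x ⬝ᵥ y = ∑ a, x a * y a := rfl
    _ = ∑ a, ∑ b, x a * y b * (if a = b then 1 else 0) := by
        refine Finset.sum_congr rfl fun a _ => ?_
        rw [Finset.sum_eq_single a]
        · simp
        · intro b _ hb; rw [if_neg (Ne.symm hb), mul_zero]
        · simp
    _ = ∑ a, ∑ b, x a * y b * ((∑ i, w i a * w i b) + ((n:ℝ) + 1)⁻¹) := by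
        exact Finset.sum_congr rfl fun a _ => Finset.sum_congr rfl fun b _ => by
          rw [claimE]
    _ = (∑ i, (w i ⬝ᵥ x) * (w i ⬝ᵥ y))
        + (x ⬝ᵥ (fun _ => (1:ℝ))) * (y ⬝ᵥ (fun _ => (1:ℝ))) / ((n:ℕ) + 1 : ℕ) := by
        rw [hswap, hone, ← Finset.sum_add_distrib]
        refine Finset.sum_congr rfl fun a _ => ?_
        rw [← Finset.sum_add_distrib]
        exact Finset.sum_congr rfl fun b _ => by ring
  

/-- The maximum of `tr(S Q Sᵀ)` subject to `S Sᵀ = Λ` and `S 𝟏 = 0`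
is attained by scaling by `√Λ` the `d` top eigenvectors of `Q` excluding the
eigenvector `𝟏`. The eigenvalues of the symmetric matrix `Q` after removing one
occurrence of the eigenvalue of `𝟏` are described by an orthonormal family `w` of
eigenvectors orthogonal to `𝟏`, with eigenvalues `β` ordered nonincreasingly. -/
theorem max_trace_SQSt_excluding_ones (m d : ℕ) (hd : d + 1 ≤ m)
    (Q : Matrix (Fin m) (Fin m) ℝ) (hQ : Q.IsSymm)
    (μ : ℝ) (h1_eig : Q *ᵥ (fun _ => (1 : ℝ)) = μ • (fun _ => (1 : ℝ)))
    (w : Fin (m - 1) → (Fin m → ℝ)) (β : Fin (m - 1) → ℝ)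
    (hw_orth : ∀ i j : Fin (m - 1), w i ⬝ᵥ w j = if i = j then (1 : ℝ) else 0)
    (hw_one : ∀ i, w i ⬝ᵥ (fun _ => (1 : ℝ)) = 0)
    (hw_eig : ∀ i, Q *ᵥ w i = β i • w i)
    (hβ_anti : ∀ i j : Fin (m - 1), i ≤ j → β j ≤ β i)
    (lam : Fin d → ℝ)
    (hlam_anti : ∀ i j : Fin d, i ≤ j → lam j ≤ lam i)
    (hlam_nonneg : ∀ j : Fin d, 0 ≤ lam j) :
    ∃ Sstar : Matrix (Fin d) (Fin m) ℝ,
      (∀ (j : Fin d) (i : Fin m),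
        Sstar j i = Real.sqrt (lam j) * w (Fin.castLE (by omega) j) i) ∧
      Sstar * Sstarᵀ = Matrix.diagonal lam ∧
      Sstar *ᵥ (fun _ => (1 : ℝ)) = 0 ∧
      ∀ S : Matrix (Fin d) (Fin m) ℝ, S * Sᵀ = Matrix.diagonal lam →
        S *ᵥ (fun _ => (1 : ℝ)) = 0 →
        (S * Q * Sᵀ).trace ≤ (Sstar * Q * Sstarᵀ).trace := by
  have hd1 : d ≤ m - 1 := by omega
  have hm : 1 ≤ m := by omega
  set Sstar : Matrix (Fin d) (Fin m) ℝ :=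
    Matrix.of fun j i => Real.sqrt (lam j) * w (Fin.castLE hd1 j) i with hSstar
  -- trace formula
  have P3 : ∀ T : Matrix (Fin d) (Fin m) ℝ,
      (T * Q * Tᵀ).trace = ∑ j, T j ⬝ᵥ (Q *ᵥ T j) := by
    intro T
    simp only [Matrix.trace, Matrix.diag, Matrix.mul_apply, Matrix.transpose_apply,
      Matrix.mulVec, dotProduct, Finset.sum_mul, Finset.mul_sum]
    refine Finset.sum_congr rfl fun j _ => ?_
    rw [Finset.sum_comm]
    exact Finset.sum_congr rfl fun k _ => Finset.sum_congr rfl fun i _ => by ring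
  have hrow : ∀ j : Fin d, (Sstar j : Fin m → ℝ)
      = Real.sqrt (lam j) • w (Fin.castLE hd1 j) := fun j => rfl
  have hQw : ∀ j : Fin d, Sstar j ⬝ᵥ (Q *ᵥ Sstar j) = lam j * β (Fin.castLE hd1 j) := by
    intro j
    rw [hrow, Matrix.mulVec_smul, hw_eig, smul_dotProduct, dotProduct_smul,
      dotProduct_smul, hw_orth, if_pos rfl]
    rw [smul_eq_mul, smul_eq_mul, smul_eq_mul, mul_one,
      ← mul_assoc, Real.mul_self_sqrt (hlam_nonneg j)]
  have trSstar : (Sstar * Q * Sstarᵀ).trace = ∑ j, lam j * β (Fin.castLE hd1 j) := by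
    rw [P3]
    exact Finset.sum_congr rfl fun j _ => hQw j
  refine ⟨Sstar, fun j i => rfl, ?_, ?_, ?_⟩
  · -- Sstar * Sstarᵀ = diagonal lam
    ext j k
    rw [Matrix.mul_apply]
    have : ∑ i, Sstar j i * Sstarᵀ i k
        = Real.sqrt (lam j) * Real.sqrt (lam k)
          * (w (Fin.castLE hd1 j) ⬝ᵥ w (Fin.castLE hd1 k)) := by
      rw [dotProduct, Finset.mul_sum]
      exact Finset.sum_congr rfl fun i _ => by
        simp only [hSstar, Matrix.transpose_apply, Matrix.of_apply]; ring
    rw [this, hw_orth]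
    by_cases hjk : j = k
    · subst hjk
      rw [if_pos rfl, mul_one, Real.mul_self_sqrt (hlam_nonneg j), Matrix.diagonal_apply_eq]
    · rw [if_neg (fun hc => hjk (Fin.castLE_injective hd1 hc)), mul_zero,
        Matrix.diagonal_apply_ne _ hjk]
  · -- Sstar *ᵥ 1 = 0
    funext j
    show Sstar j ⬝ᵥ (fun _ => (1:ℝ)) = 0
    rw [hrow, smul_dotProduct, hw_one, smul_zero]
  · -- the maximality
    intro S hSS hS1
    have hs1 : ∀ j, S j ⬝ᵥ (fun _ => (1:ℝ)) = 0 := fun j => congrFun hS1 j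
    have hss : ∀ j k, S j ⬝ᵥ S k = Matrix.diagonal lam j k := by
      intro j k
      have := congrFun (congrFun hSS j) k
      simpa [Matrix.mul_apply, Matrix.transpose_apply, dotProduct] using this
    set c : Fin d → Fin (m - 1) → ℝ := fun j i => w i ⬝ᵥ S j with hc
    have P1 : ∀ j k, ∑ i, c j i * c k i = Matrix.diagonal lam j k := by
      intro j k
      have hp := parseval hm w hw_orth hw_one (S j) (S k)
      rw [hs1 j, zero_mul, zero_div, add_zero] at hp
      rw [← hp]
      exact hss j k
    have P1d : ∀ j, ∑ i, c j i * c j i = lam j := by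
      intro j
      rw [P1 j j, Matrix.diagonal_apply_eq]
    have P2 : ∀ j, S j ⬝ᵥ (Q *ᵥ S j) = ∑ i, β i * (c j i) ^ 2 := by
      intro j
      have hp := parseval hm w hw_orth hw_one (S j) (Q *ᵥ S j)
      rw [hs1 j, zero_mul, zero_div, add_zero] at hp
      rw [hp]
      refine Finset.sum_congr rfl fun i _ => ?_
      have hwQ : w i ⬝ᵥ (Q *ᵥ S j) = β i * c j i := by
        rw [Matrix.dotProduct_mulVec, ← Matrix.mulVec_transpose, hQ.eq, hw_eig,
          smul_dotProduct, smul_eq_mul]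
      rw [hwQ, hc]
      ring
    have hczero : ∀ j, lam j = 0 → ∀ i, c j i = 0 := by
      intro j hj i
      have h0 : ∑ i, c j i * c j i = 0 := by rw [P1d j, hj]
      have := (Finset.sum_eq_zero_iff_of_nonneg
        (fun i _ => mul_self_nonneg (c j i))).mp h0 i (Finset.mem_univ i)
      exact mul_self_eq_zero.mp this
    set p : Fin d → Fin (m - 1) → ℝ := fun j i =>
      (if lam j = 0 then 0 else c j i / Real.sqrt (lam j)) ^ 2 with hpdef
    have hp0 : ∀ j i, 0 ≤ p j i := fun j i => sq_nonneg _
    have hcp : ∀ j i, (c j i) ^ 2 = lam j * p j i := by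
      intro j i
      by_cases hj : lam j = 0
      · rw [hpdef]
        simp [hj, hczero j hj i]
      · have hlpos : 0 < lam j := lt_of_le_of_ne (hlam_nonneg j) (Ne.symm hj)
        rw [hpdef]
        simp only [if_neg hj, div_pow, Real.sq_sqrt (hlam_nonneg j)]
        field_simp
    have hprow : ∀ j, lam j ≠ 0 → ∑ i, p j i = 1 := by
      intro j hj
      have h1 : ∑ i, p j i = (∑ i, (c j i) ^ 2) / lam j := by
        rw [Finset.sum_div]
        refine Finset.sum_congr rfl fun i _ => ?_
        rw [hpdef]
        simp only [if_neg hj, div_pow, Real.sq_sqrt (hlam_nonneg j)]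
      have h2 : ∑ i, (c j i) ^ 2 = lam j := by
        rw [← P1d j]
        exact Finset.sum_congr rfl fun i _ => sq (c j i)
      rw [h1, h2, div_self hj]
    have hpcol : ∀ i, ∑ j, p j i ≤ 1 := by
      intro i
      set v : Fin d → Fin m → ℝ := fun j =>
        if lam j = 0 then 0 else (Real.sqrt (lam j))⁻¹ • S j with hv
      have hpv : ∀ j, p j i = (v j ⬝ᵥ w i) ^ 2 := by
        intro j
        by_cases hj : lam j = 0
        · rw [hpdef, hv]; simp [hj]
        · rw [hpdef, hv]
          simp only [if_neg hj, smul_dotProduct, smul_eq_mul]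
          rw [dotProduct_comm, hc, div_eq_inv_mul]
      have horth : ∀ j k, j ≠ k → v j ⬝ᵥ v k = 0 := by
        intro j k hjk
        rw [hv]
        by_cases hj : lam j = 0
        · simp [hj]
        by_cases hk : lam k = 0
        · simp [hk]
        simp only [if_neg hj, if_neg hk, smul_dotProduct, dotProduct_smul, smul_eq_mul]
        rw [hss j k, Matrix.diagonal_apply_ne _ hjk]
        ring
      have hnorm : ∀ j, v j ⬝ᵥ v j ≤ 1 := by
        intro j
        rw [hv]
        by_cases hj : lam j = 0
        · simp [hj]
        · simp only [if_neg hj, smul_dotProduct, dotProduct_smul, smul_eq_mul]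
          rw [hss j j, Matrix.diagonal_apply_eq]
          rw [← Real.sqrt_inv, ← mul_assoc, Real.mul_self_sqrt (inv_nonneg.mpr (hlam_nonneg j))]
          rw [inv_mul_cancel₀ hj]
      have hx : w i ⬝ᵥ w i = 1 := by rw [hw_orth, if_pos rfl]
      calc ∑ j, p j i = ∑ j, (v j ⬝ᵥ w i) ^ 2 :=
            Finset.sum_congr rfl fun j _ => hpv j
        _ ≤ 1 := bessel v horth hnorm (w i) hx
    -- assemble
    set L : ℕ → ℝ := fun u => if h : u < d then lam ⟨u, h⟩ else 0 with hL
    set B : ℕ → ℝ := fun u => if h : u < m - 1 then β ⟨u, h⟩ else 0 with hB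
    set P : ℕ → ℕ → ℝ := fun u v =>
      if h : u < d then (if h' : v < m - 1 then p ⟨u, h⟩ ⟨v, h'⟩ else 0) else 0 with hP
    have convL : ∑ u ∈ range d, L u * ∑ v ∈ range (m - 1), P u v * B v
        = ∑ j : Fin d, lam j * ∑ i, p j i * β i := by
      rw [← sum_range_dite d (fun j => lam j * ∑ i, p j i * β i)]
      refine Finset.sum_congr rfl fun u hu => ?_
      have hud : u < d := mem_range.mp hu
      rw [dif_pos hud, hL]
      simp only [dif_pos hud]
      congr 1
      rw [← sum_range_dite (m - 1) (fun i => p ⟨u, hud⟩ i * β i)]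
      refine Finset.sum_congr rfl fun v hv => ?_
      have hvm : v < m - 1 := mem_range.mp hv
      rw [hP, hB]
      simp only [dif_pos hud, dif_pos hvm]
    have convR : ∑ u ∈ range d, L u * B u = ∑ j : Fin d, lam j * β (Fin.castLE hd1 j) := by
      rw [← sum_range_dite d (fun j => lam j * β (Fin.castLE hd1 j))]
      refine Finset.sum_congr rfl fun u hu => ?_
      have hud : u < d := mem_range.mp hu
      rw [dif_pos hud, hL, hB]
      simp only [dif_pos hud, dif_pos (lt_of_lt_of_le hud hd1)]
      rfl
    have keyapp := key_ineq d (m - 1) hd1 L B P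
      (by intro u hu; rw [hL]; simp only [dif_pos hu]; exact hlam_nonneg _)
      (by intro u v huv hv; rw [hL]
          simp only [dif_pos hv, dif_pos (lt_of_le_of_lt huv hv)]
          exact hlam_anti _ _ huv)
      (by intro u v huv hv; rw [hB]
          simp only [dif_pos hv, dif_pos (lt_of_le_of_lt huv hv)]
          exact hβ_anti _ _ huv)
      (by intro u v; rw [hP]
          by_cases h : u < d
          · by_cases h' : v < m - 1
            · simp only [dif_pos h, dif_pos h']; exact hp0 _ _
            · simp [h, h']
          · simp [h])
      (by intro u hu hLu; rw [hP]
          rw [hL] at hLu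
          simp only [dif_pos hu] at hLu
          simp only [dif_pos hu]
          rw [sum_range_dite (m - 1) (fun i => p ⟨u, hu⟩ i)]
          exact hprow ⟨u, hu⟩ (ne_of_gt hLu))
      (by intro v; rw [hP]
          by_cases h' : v < m - 1
          · simp only [dif_pos h']
            rw [sum_range_dite d (fun j => p j ⟨v, h'⟩)]
            exact hpcol ⟨v, h'⟩
          · simp only [dif_neg h']
            simp)
    rw [convL, convR] at keyapp
    calc (S * Q * Sᵀ).trace = ∑ j, S j ⬝ᵥ (Q *ᵥ S j) := P3 S
      _ = ∑ j : Fin d, ∑ i, β i * (c j i) ^ 2 :=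
          Finset.sum_congr rfl fun j _ => P2 j
      _ = ∑ j : Fin d, lam j * ∑ i, p j i * β i := by
          refine Finset.sum_congr rfl fun j _ => ?_
          rw [Finset.mul_sum]
          refine Finset.sum_congr rfl fun i _ => ?_
          rw [hcp j i]
          ring
      _ ≤ ∑ j : Fin d, lam j * β (Fin.castLE hd1 j) := keyapp
      _ = (Sstar * Q * Sstarᵀ).trace := trSstar.symm
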